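/- Suppose f ∈ E₀¹ is δ-good for every δ > 0. Then f admits no σ-finite invariant measure absolutely continuous with respect to Lebesgue measure. Concretely: if μ is such a measure with density ρ, choose c > 0 with m(Z) > 0 for Z = {c ≤ ρ ≤ 1.1c}, then a distorted first return map f_I on an interval I with m(I ∩ Z)/m(I) > 0.9 leads to μ(f_I⁻¹(Y)) > μ(Y) for Y = A ∩ Z, contradicting the inequality μ(f_I⁻¹(Y)) ≤ μ(Y) valid for invariant measures. -/

import Mathlib

open MeasureTheory Set ENNReal

/-- Markov interval of order `n` expressed through a lift `F` of a circle map fixing `0`. -/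
def MarkovInterval (F : ℝ → ℝ) (n : ℕ) (a b : ℝ) : Prop :=
  a < b ∧ (∀ x ∈ Set.Ioo a b, F^[n] x ∉ Set.range (Int.cast : ℤ → ℝ)) ∧
    F^[n] a ∈ Set.range (Int.cast : ℤ → ℝ) ∧ F^[n] b ∈ Set.range (Int.cast : ℤ → ℝ)

/-- `F` is a lift of the circle map `f` of degree `d`, with `F 0 = 0`. -/
def IsLiftOf (f : UnitAddCircle → UnitAddCircle) (F : ℝ → ℝ) (d : ℤ) : Prop :=
  (∀ x : ℝ, f (x : UnitAddCircle) = ((F x : ℝ) : UnitAddCircle)) ∧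
    (∀ x : ℝ, F (x + 1) = F x + d) ∧ F 0 = 0

/-- The first return time of `x` to the set `I` under `f` (junk value if `x` never returns). -/
noncomputable def retTime {α : Type*} (f : α → α) (I : Set α) (x : α) : ℕ :=
  sInf {n : ℕ | 1 ≤ n ∧ f^[n] x ∈ I}

/-- The first return map of `f` to the set `I`. -/
noncomputable def retMap {α : Type*} (f : α → α) (I : Set α) (x : α) : α :=
  f^[retTime f I x] x

/-- A non-singular self-map `φ` of an interval `I` is *distorted* if there is a measurable
`A ⊆ I` with `m(A)/m(I) > 0.4` on which the density `d(φ_* m_I)/d m_I` exceeds `2`. -/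
def Distorted (φ : UnitAddCircle → UnitAddCircle) (I : Set UnitAddCircle) : Prop :=
  ∃ A : Set UnitAddCircle, MeasurableSet A ∧ A ⊆ I ∧
    ENNReal.ofReal (0.4 : ℝ) * volume I < volume A ∧
    ∀ x ∈ A, (2 : ℝ≥0∞) <
      Measure.rnDeriv (Measure.map φ (volume.restrict I)) (volume.restrict I) x

/-- `f` (with lift `F`) is *`δ`-good*: there is a countable family `𝓘` of Markov intervals,
all of length at most `δ`, with `m(⋃ 𝓘) > 1 − δ`, such that for every `I ∈ 𝓘` the first
return map `f_I : I → I` is distorted. -/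
def DeltaGood (f : UnitAddCircle → UnitAddCircle) (F : ℝ → ℝ) (δ : ℝ) : Prop :=
  ∃ 𝓘 : Set (Set UnitAddCircle), 𝓘.Countable ∧
    (∀ I ∈ 𝓘, (∃ (n : ℕ) (a b : ℝ), MarkovInterval F n a b ∧
        I = (fun x : ℝ => (x : UnitAddCircle)) '' Set.Ioo a b) ∧
      volume I ≤ ENNReal.ofReal δ ∧ Distorted (retMap f I) I) ∧
    ENNReal.ofReal (1 - δ) < volume (⋃₀ 𝓘)

/-! ### Auxiliary lemmas on return times -/

section retTimeLemmas
variable {α : Type*} {f : α → α} {I : Set α} {x : α}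

lemma retTime_eq_zero_iff :
    retTime f I x = 0 ↔ ∀ k, 1 ≤ k → f^[k] x ∉ I := by
  unfold retTime
  rw [Nat.sInf_eq_zero]
  constructor
  · rintro (⟨h0, -⟩ | he)
    · omega
    · intro k hk hkI
      exact eq_empty_iff_forall_notMem.mp he k ⟨hk, hkI⟩
  · intro h
    right
    ext n
    simp only [mem_setOf_eq, mem_empty_iff_false, iff_false, not_and]
    exact fun h1 => h n h1

lemma not_mem_of_lt_retTime {k : ℕ} (h1 : 1 ≤ k) (h2 : k < retTime f I x) :
    f^[k] x ∉ I := by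
  intro hk
  have h3 : retTime f I x ≤ k := Nat.sInf_le ⟨h1, hk⟩
  omega

lemma retTime_spec (h : retTime f I x ≠ 0) :
    1 ≤ retTime f I x ∧ f^[retTime f I x] x ∈ I := by
  have hne : {n : ℕ | 1 ≤ n ∧ f^[n] x ∈ I}.Nonempty := by
    by_contra he
    rw [not_nonempty_iff_eq_empty] at he
    exact h (by unfold retTime; rw [he]; simp)
  exact Nat.sInf_mem hne

lemma retTime_eq_succ_iff {n : ℕ} :
    retTime f I x = n + 1 ↔
      f^[n+1] x ∈ I ∧ ∀ k, 1 ≤ k → k ≤ n → f^[k] x ∉ I := by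
  constructor
  · intro h
    have hne : retTime f I x ≠ 0 := by omega
    obtain ⟨-, hmem⟩ := retTime_spec hne
    rw [h] at hmem
    exact ⟨hmem, fun k hk1 hkn => not_mem_of_lt_retTime hk1 (by omega)⟩
  · rintro ⟨h1, h2⟩
    have hle : retTime f I x ≤ n + 1 := Nat.sInf_le ⟨by omega, h1⟩
    have hne : retTime f I x ≠ 0 := by
      intro h0
      rw [retTime_eq_zero_iff] at h0
      exact h0 (n+1) (by omega) h1
    obtain ⟨hg1, hmem⟩ := retTime_spec hne
    by_contra hne'
    exact h2 _ hg1 (by omega) hmem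

variable [MeasurableSpace α] (hf : Measurable f) (hI : MeasurableSet I)
include hf hI

lemma measurable_retTime : Measurable (retTime f I) := by
  apply measurable_to_countable'
  intro n
  match n with
  | 0 =>
    have h1 : {x | retTime f I x = 0} = ⋂ k : ℕ, (f^[k+1] ⁻¹' I)ᶜ := by
      ext x
      simp only [mem_setOf_eq, retTime_eq_zero_iff, mem_iInter, mem_compl_iff, mem_preimage]
      refine ⟨fun h k => h (k+1) (by omega), fun h k hk => ?_⟩
      match k, hk with
      | (j+1), _ => exact h j
    have he : retTime f I ⁻¹' {0} = {x | retTime f I x = 0} := by ext x; simp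
    rw [he, h1]
    exact MeasurableSet.iInter fun k => ((hf.iterate (k+1)) hI).compl
  | n + 1 =>
    have h1 : {x | retTime f I x = n + 1} =
        (f^[n+1] ⁻¹' I) ∩ ⋂ (k : ℕ) (_ : 1 ≤ k) (_ : k ≤ n), (f^[k] ⁻¹' I)ᶜ := by
      ext x
      simp only [mem_setOf_eq, retTime_eq_succ_iff, mem_inter_iff, mem_preimage, mem_iInter,
        mem_compl_iff]
    have he : retTime f I ⁻¹' {n+1} = {x | retTime f I x = n + 1} := by ext x; simp
    rw [he, h1]
    exact ((hf.iterate (n+1)) hI).inter <| MeasurableSet.iInter fun k =>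
      MeasurableSet.iInter fun _ => MeasurableSet.iInter fun _ => ((hf.iterate k) hI).compl

lemma measurable_retMap : Measurable (retMap f I) := by
  have h1 : Measurable fun p : α × ℕ => f^[p.2] p.1 :=
    measurable_from_prod_countable_left fun n => hf.iterate n
  exact h1.comp ((measurable_id.prodMk (measurable_retTime hf hI)))

end retTimeLemmas

/-! ### Auxiliary lemmas on the unit circle -/

section circleLemmas

lemma coe_eq_coe_iff_circ {x t : ℝ} :
    (x : UnitAddCircle) = (t : UnitAddCircle) ↔ ∃ k : ℤ, x = t + k := by
  rw [QuotientAddGroup.eq_iff_sub_mem]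
  constructor
  · rintro h
    obtain ⟨k, hk⟩ := AddSubgroup.mem_zmultiples_iff.mp h
    have hk2 : (k:ℝ) = x - t := by simpa using hk
    exact ⟨k, by linarith⟩
  · rintro ⟨k, rfl⟩
    exact AddSubgroup.mem_zmultiples_iff.mpr ⟨k, by simp⟩

lemma isOpen_image_Ioo_circ {a b : ℝ} :
    IsOpen ((fun x : ℝ => (x : UnitAddCircle)) '' Ioo a b) :=
  QuotientAddGroup.isOpenMap_coe _ isOpen_Ioo

lemma preimage_image_Ioo_circ {a b : ℝ} (h1 : b ≤ a + 1) :
    (fun x : ℝ => (x : UnitAddCircle)) ⁻¹' ((fun x : ℝ => (x : UnitAddCircle)) '' Ioo a b)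
      ∩ Ioc a (a + 1) = Ioo a b := by
  ext x
  constructor
  · rintro ⟨⟨t, ht, hxt⟩, hx⟩
    obtain ⟨k, rfl⟩ := coe_eq_coe_iff_circ.mp hxt.symm
    have hk : k = 0 := by
      rcases ht with ⟨h1', h2'⟩
      rcases hx with ⟨h3', h4'⟩
      have : (-1 : ℝ) < k := by linarith
      have : (k : ℝ) < 1 := by linarith
      have : (-1 : ℤ) < k := by exact_mod_cast ‹(-1:ℝ) < k›
      have : (k : ℤ) < 1 := by exact_mod_cast ‹(k:ℝ) < 1›
      omega
    subst hk
    simpa using ht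
  · intro hx
    exact ⟨mem_image_of_mem _ hx, Ioo_subset_Ioc_self.trans (Ioc_subset_Ioc_right h1) hx⟩

lemma volume_image_Ioo_circ {a b : ℝ} (h1 : b ≤ a + 1) :
    volume ((fun x : ℝ => (x : UnitAddCircle)) '' Ioo a b) = ENNReal.ofReal (b - a) := by
  rw [AddCircle.add_projection_respects_measure (T := 1) a
    isOpen_image_Ioo_circ.measurableSet]
  rw [show (QuotientAddGroup.mk ⁻¹'
      ((fun x : ℝ => (x : UnitAddCircle)) '' Ioo a b) ∩ Ioc a (a + 1)) =
    Ioo a b from preimage_image_Ioo_circ h1]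
  exact Real.volume_Ioo

lemma dist_coe_le_circ {u t : ℝ} :
    dist (u : UnitAddCircle) (t : UnitAddCircle) ≤ |u - t| := by
  rw [dist_eq_norm]
  rw [← AddCircle.coe_sub]
  simpa [Real.norm_eq_abs] using QuotientAddGroup.norm_mk_le_norm (S := AddSubgroup.zmultiples (1:ℝ)) (m := u - t)

lemma volume_univ_circ : volume (univ : Set UnitAddCircle) = 1 := by
  rw [AddCircle.measure_univ]
  simp

end circleLemmas

/-! ### The return-map flow inequality for invariant measures -/

section flow
variable {α : Type*} [MeasurableSpace α] {f : α → α} {I Y : Set α} {μ : Measure α}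

lemma flow_le (hf : Measurable f) (hI : MeasurableSet I) (hY : MeasurableSet Y)
    (hinv : ∀ A : Set α, MeasurableSet A → μ (f ⁻¹' A) = μ A)
    (hYN : ∀ x ∈ Y, retTime f I x ≠ 0) :
    μ (I ∩ retMap f I ⁻¹' Y) ≤ μ Y := by
  set W : ℕ → Set α := fun n =>
    f^[n] ⁻¹' Y ∩ ⋂ (k : ℕ) (_ : 1 ≤ k) (_ : k < n), (f^[k] ⁻¹' I)ᶜ with hWdef
  have hWmeas : ∀ n, MeasurableSet (W n) := fun n =>
    ((hf.iterate n) hY).inter <| .iInter fun k => .iInter fun _ => .iInter fun _ =>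
      ((hf.iterate k) hI).compl
  have hW1 : W 1 = f ⁻¹' Y := by
    ext x
    simp only [hWdef, mem_inter_iff, mem_preimage, mem_iInter, mem_compl_iff]
    constructor
    · rintro ⟨h1, -⟩; simpa using h1
    · intro h; exact ⟨by simpa using h, fun k h1 h2 => by omega⟩
  have hrec : ∀ n, 1 ≤ n → W (n + 1) = f ⁻¹' (W n \ I) := by
    intro n hn
    ext x
    simp only [hWdef, mem_inter_iff, mem_preimage, mem_iInter, mem_compl_iff, mem_diff]
    constructor
    · rintro ⟨h1, h2⟩
      refine ⟨⟨by rw [← Function.iterate_succ_apply]; exact h1, fun k hk1 hkn => ?_⟩, ?_⟩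
      · rw [← Function.iterate_succ_apply]
        exact h2 (k + 1) (by omega) (by omega)
      · simpa using h2 1 le_rfl (by omega)
    · rintro ⟨⟨h1, h2⟩, h3⟩
      refine ⟨by rwa [Function.iterate_succ_apply], fun k hk1 hkn => ?_⟩
      match k, hk1, hkn with
      | 1, _, _ => simpa using h3
      | (j + 2), _, hkn =>
        rw [Function.iterate_succ_apply]
        exact h2 (j + 1) (by omega) (by omega)
  have hkey : ∀ n, 1 ≤ n → μ (W (n + 1)) + μ (W n ∩ I) = μ (W n) := by
    intro n hn
    rw [hrec n hn, hinv _ ((hWmeas n).diff hI)]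
    exact measure_diff_add_inter _ hI
  have htel : ∀ N : ℕ, μ (W (N + 1)) + ∑ k ∈ Finset.Ico 1 (N + 1), μ (W k ∩ I) = μ Y := by
    intro N
    induction N with
    | zero => simp [hW1, hinv _ hY]
    | succ N ih =>
      rw [Finset.sum_Ico_succ_top (by omega : 1 ≤ N + 1), ← add_assoc, add_right_comm,
        hkey (N + 1) (by omega)]
      exact ih
  have hsum : ∀ N : ℕ, ∑ k ∈ Finset.Ico 1 (N + 1), μ (W k ∩ I) ≤ μ Y := fun N =>
    le_add_self.trans_eq (htel N)
  have hcover : I ∩ retMap f I ⁻¹' Y ⊆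
      ⋃ n : ℕ, ({x | retTime f I x = n + 1} ∩ (W (n + 1) ∩ I)) := by
    rintro x ⟨hxI, hxY⟩
    rw [mem_preimage] at hxY
    have hn0 : retTime f I x ≠ 0 := by
      intro h0
      have hid : retMap f I x = x := by rw [retMap, h0]; simp
      rw [hid] at hxY
      exact hYN x hxY h0
    obtain ⟨m, hm⟩ : ∃ m, retTime f I x = m + 1 := ⟨retTime f I x - 1, by omega⟩
    refine mem_iUnion.mpr ⟨m, hm, ⟨?_, ?_⟩, hxI⟩
    · rw [← hm]
      exact hxY
    · simp only [mem_iInter, mem_compl_iff, mem_preimage]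
      intro k h1 h2
      exact not_mem_of_lt_retTime h1 (by omega)
  calc μ (I ∩ retMap f I ⁻¹' Y)
      ≤ ∑' n : ℕ, μ ({x | retTime f I x = n + 1} ∩ (W (n + 1) ∩ I)) :=
        (measure_mono hcover).trans (measure_iUnion_le _)
    _ ≤ ∑' n : ℕ, μ (W (n + 1) ∩ I) :=
        ENNReal.tsum_le_tsum fun n => measure_mono inter_subset_right
    _ ≤ μ Y := by
        refine Summable.tsum_le_of_sum_le ENNReal.summable fun s => ?_
        obtain ⟨N, hN⟩ := s.exists_nat_subset_range
        calc ∑ n ∈ s, μ (W (n + 1) ∩ I)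
            ≤ ∑ n ∈ Finset.range N, μ (W (n + 1) ∩ I) :=
              Finset.sum_le_sum_of_subset hN
          _ = ∑ k ∈ Finset.Ico 1 (N + 1), μ (W k ∩ I) := by
              rw [Finset.sum_Ico_eq_sum_range]
              simp [add_comm]
          _ ≤ μ Y := hsum N

end flow

/-! ### Lower bound from the distortion hypothesis -/

lemma push_lower {I A Y : Set UnitAddCircle} {φ : UnitAddCircle → UnitAddCircle}
    (hφ : Measurable φ) (hIm : MeasurableSet I) (hYm : MeasurableSet Y)
    (hYA : Y ⊆ A) (hAI : A ⊆ I)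
    (hA2 : ∀ x ∈ A, (2 : ℝ≥0∞) <
      Measure.rnDeriv (Measure.map φ (volume.restrict I)) (volume.restrict I) x) :
    2 * volume Y ≤ volume (I ∩ φ ⁻¹' Y) := by
  have hYI : Y ⊆ I := hYA.trans hAI
  calc 2 * volume Y
      = ∫⁻ _x in Y, 2 ∂(volume.restrict I) := by
        rw [setLIntegral_const, Measure.restrict_apply hYm,
          inter_eq_self_of_subset_left hYI, mul_comm]
    _ ≤ ∫⁻ x in Y, Measure.rnDeriv (Measure.map φ (volume.restrict I))
          (volume.restrict I) x ∂(volume.restrict I) :=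
        setLIntegral_mono (Measure.measurable_rnDeriv _ _) fun x hx => (hA2 x (hYA hx)).le
    _ ≤ Measure.map φ (volume.restrict I) Y := Measure.setLIntegral_rnDeriv_le Y
    _ = volume (I ∩ φ ⁻¹' Y) := by
        rw [Measure.map_apply hφ hYm, Measure.restrict_apply (hφ hYm), inter_comm]

/-! ### Existence of a good interval almost filled by a given positive-measure set -/

lemma exists_good_interval {f : UnitAddCircle → UnitAddCircle} {F : ℝ → ℝ}
    (hgood : ∀ δ : ℝ, 0 < δ → DeltaGood f F δ)
    {S : Set UnitAddCircle} (hSm : MeasurableSet S) (hS0 : 0 < volume S) :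
    ∃ I : Set UnitAddCircle, MeasurableSet I ∧ 0 < volume I ∧
      Distorted (retMap f I) I ∧
      volume (I \ S) ≤ ENNReal.ofReal 0.1 * volume I := by
  have H : ∀ n : ℕ, DeltaGood f F (1 / (n + 1)) := fun n => hgood _ (by positivity)
  choose 𝓘 hcnt hmem hcov using H
  have hIopen : ∀ n I, I ∈ 𝓘 n → IsOpen I := by
    intro n I hI
    obtain ⟨⟨n', a, b, hM, rfl⟩, -, -⟩ := hmem n I hI
    exact isOpen_image_Ioo_circ
  set U : ℕ → Set UnitAddCircle := fun n => ⋃₀ 𝓘 n with hUdef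
  have hUm : ∀ n, MeasurableSet (U n) := fun n =>
    MeasurableSet.sUnion (hcnt n) fun I hI => (hIopen n I hI).measurableSet
  have hUc : ∀ n : ℕ, volume (U n)ᶜ ≤ ENNReal.ofReal (1 / (n + 1)) := by
    intro n
    have hδ1 : (1 : ℝ) / (n + 1) ≤ 1 := by
      rw [div_le_one (by positivity)]
      simp
    have h1 : ENNReal.ofReal (1 - 1 / (n + 1)) ≤ volume (U n) := (hcov n).le
    calc volume (U n)ᶜ = volume (univ : Set UnitAddCircle) - volume (U n) :=
          measure_compl (hUm n) (measure_ne_top _ _)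
      _ ≤ ENNReal.ofReal 1 - ENNReal.ofReal (1 - 1 / (n + 1)) := by
          rw [volume_univ_circ, ← ENNReal.ofReal_one] at *
          exact tsub_le_tsub le_rfl h1
      _ = ENNReal.ofReal (1 / (n + 1)) := by
          rw [← ENNReal.ofReal_sub _ (by linarith)]
          norm_num
  set T : Set UnitAddCircle := ⋂ N : ℕ, ⋃ (n : ℕ) (_ : N ≤ n), U n with hTdef
  have hTc : volume Tᶜ = 0 := by
    have hTc' : Tᶜ = ⋃ N : ℕ, (⋃ (n : ℕ) (_ : N ≤ n), U n)ᶜ := by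
      rw [hTdef, compl_iInter]
    rw [hTc']
    refine measure_iUnion_null fun N => ?_
    have hb : ∀ n : ℕ, N ≤ n → volume ((⋃ (n : ℕ) (_ : N ≤ n), U n)ᶜ) ≤
        ENNReal.ofReal (1 / (n + 1)) := by
      intro n hn
      refine le_trans (measure_mono ?_) (hUc n)
      rw [compl_subset_compl]
      exact subset_iUnion₂ (s := fun n _ => U n) n hn
    have hb2 : ∀ n : ℕ, volume ((⋃ (n : ℕ) (_ : N ≤ n), U n)ᶜ) ≤
        ENNReal.ofReal (1 / (n + 1)) := by
      intro n
      rcases le_or_gt N n with h | h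
      · exact hb n h
      · refine le_trans (hb N le_rfl) (ENNReal.ofReal_le_ofReal ?_)
        apply one_div_le_one_div_of_le (by positivity)
        have : (n : ℝ) ≤ N := by exact_mod_cast h.le
        linarith
    have hlim : Filter.Tendsto (fun n : ℕ => ENNReal.ofReal (1 / (n + 1)))
        Filter.atTop (nhds 0) := by
      rw [← ENNReal.ofReal_zero]
      apply ENNReal.tendsto_ofReal
      exact tendsto_one_div_add_atTop_nhds_zero_nat
    have := ge_of_tendsto hlim (Filter.Eventually.of_forall hb2)
    simpa using this
  -- pick a density point of `S` inside `T`
  set Q : UnitAddCircle → Prop := fun x => Filter.Tendsto (fun r : ℝ =>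
      volume (S ∩ Metric.closedBall x r) / volume (Metric.closedBall x r))
      (nhdsWithin 0 (Ioi 0)) (nhds 1) with hQdef
  have hdens2 : ∀ᵐ x ∂((volume : Measure UnitAddCircle).restrict S), Q x := by
    filter_upwards [IsUnifLocDoublingMeasure.ae_tendsto_measure_inter_div
      (volume : Measure UnitAddCircle) S 1] with x hx
    exact hx (fun _ : ℝ => x) id Filter.tendsto_id
      (eventually_nhdsWithin_of_forall fun r hr =>
        Metric.mem_closedBall_self (by simpa using le_of_lt hr))
  have hdens0 : volume ({x | ¬ Q x} ∩ S) = 0 := by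
    have := ae_iff.mp hdens2
    rwa [Measure.restrict_apply' hSm] at this
  obtain ⟨x, hxS, htd, hxT⟩ : ∃ x, x ∈ S ∧ Q x ∧ x ∈ T := by
    by_contra hc
    push_neg at hc
    have hsub : S ⊆ ({x | ¬ Q x} ∩ S) ∪ Tᶜ := by
      intro x hx
      rcases Classical.em (Q x) with hQ | hQ
      · exact Or.inr (hc x hx hQ)
      · exact Or.inl ⟨hQ, hx⟩
    have hle : volume S ≤ 0 := by
      refine le_trans (measure_mono hsub) ?_
      refine le_trans (measure_union_le _ _) ?_
      rw [hdens0, hTc, add_zero]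
    exact absurd (le_antisymm hle zero_le) hS0.ne'
  rw [hQdef] at htd
  have hev : ∀ᶠ r in nhdsWithin (0:ℝ) (Ioi 0), ENNReal.ofReal 0.975 <
      volume (S ∩ Metric.closedBall x r) / volume (Metric.closedBall x r) :=
    htd.eventually (eventually_gt_nhds (by
      rw [← ENNReal.ofReal_one, ENNReal.ofReal_lt_ofReal_iff] <;> norm_num))
  obtain ⟨r₀, hr₀pos, hr₀⟩ := (nhdsGT_basis (0:ℝ)).eventually_iff.mp hev
  obtain ⟨N, hN⟩ := exists_nat_one_div_lt (show (0:ℝ) < min r₀ (1/2) by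
    exact lt_min hr₀pos (by norm_num))
  -- get an interval containing x of generation n ≥ N
  have hxT' : x ∈ ⋃ (n : ℕ) (_ : N ≤ n), U n := by
    rw [hTdef] at hxT
    exact mem_iInter.mp hxT N
  obtain ⟨n, hn, hxU⟩ := mem_iUnion₂.mp hxT'
  obtain ⟨I, hI𝓘, hxI⟩ := hxU
  obtain ⟨⟨n', a, b, hM, hIeq⟩, hlen, hdist⟩ := hmem n I hI𝓘
  have hab : a < b := hM.1
  have hIm : MeasurableSet I := (hIopen n I hI𝓘).measurableSet
  have hIpos : 0 < volume I := by
    rcases eq_or_ne (volume I) 0 with h0 | h0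
    · exfalso
      obtain ⟨A, hAm, hAI, hA04, -⟩ := hdist
      have h1 : volume A ≤ volume I := measure_mono hAI
      rw [h0, mul_zero] at hA04
      exact absurd (lt_of_lt_of_le hA04 (h1.trans h0.le)) (lt_irrefl 0)
    · exact pos_iff_ne_zero.mpr h0
  have hδn : (1:ℝ) / (n + 1) ≤ 1 / (N + 1) := by
    apply one_div_le_one_div_of_le (by positivity)
    have : (N : ℝ) ≤ n := by exact_mod_cast hn
    linarith
  have hδsmall : (1:ℝ) / (n + 1) < min r₀ (1/2) := lt_of_le_of_lt hδn hN
  have hb1 : b ≤ a + 1 := by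
    by_contra hb1
    push_neg at hb1
    have huniv : (univ : Set UnitAddCircle) ⊆ I := by
      rw [hIeq, ← AddCircle.coe_image_Ioc_eq (p := (1:ℝ)) a]
      exact image_mono (fun z hz => ⟨hz.1, lt_of_le_of_lt hz.2 hb1⟩)
    have h1 : (1 : ℝ≥0∞) ≤ volume I := by
      rw [← volume_univ_circ]
      exact measure_mono huniv
    have h2 : volume I < 1 := lt_of_le_of_lt hlen (by
      rw [← ENNReal.ofReal_one]
      refine (ENNReal.ofReal_lt_ofReal_iff (by norm_num)).mpr ?_
      have := min_le_right r₀ (1/2 : ℝ)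
      linarith [hδsmall])
    exact absurd (lt_of_le_of_lt h1 h2) (lt_irrefl _)
  have hvolI : volume I = ENNReal.ofReal (b - a) := by
    rw [hIeq]
    exact volume_image_Ioo_circ hb1
  set r : ℝ := b - a with hrdef
  have hr0 : 0 < r := by rw [hrdef]; linarith
  have hrδ : r ≤ 1 / (n + 1) := by
    rw [hvolI] at hlen
    exact (ENNReal.ofReal_le_ofReal_iff (by positivity)).mp hlen
  have hrr₀ : r < r₀ := lt_of_le_of_lt hrδ (lt_of_lt_of_le hδsmall (min_le_left _ _))
  have hr12 : 2 * r ≤ 1 := by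
    have := lt_of_lt_of_le hδsmall (min_le_right _ _)
    linarith [hrδ]
  -- the interval is inside the ball of radius r around x
  obtain ⟨t, ht, hxt⟩ : ∃ t ∈ Ioo a b, (t : UnitAddCircle) = x := by
    rw [hIeq] at hxI
    exact hxI
  have hIball : I ⊆ Metric.closedBall x r := by
    rw [hIeq]
    rintro y ⟨u, hu, rfl⟩
    rw [Metric.mem_closedBall, ← hxt]
    refine le_trans dist_coe_le_circ ?_
    rw [abs_le]
    constructor
    · rcases ht with ⟨ht1, ht2⟩; rcases hu with ⟨hu1, hu2⟩
      simp only [hrdef]; linarith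
    · rcases ht with ⟨ht1, ht2⟩; rcases hu with ⟨hu1, hu2⟩
      simp only [hrdef]; linarith
  have hcb : volume (Metric.closedBall x r) = ENNReal.ofReal (2 * r) := by
    rw [AddCircle.volume_closedBall]
    congr 1
    rw [min_eq_right]
    linarith
  -- density estimate
  have hratio := hr₀ ⟨hr0, hrr₀⟩
  have hSc : ENNReal.ofReal (0.975 * (2 * r)) ≤ volume (S ∩ Metric.closedBall x r) := by
    rw [ENNReal.ofReal_mul (by norm_num)]
    have hne0 : volume (Metric.closedBall x r) ≠ 0 := by
      rw [hcb]
      simp only [ne_eq, ENNReal.ofReal_eq_zero, not_le]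
      linarith
    have hneT : volume (Metric.closedBall x r) ≠ ∞ := measure_ne_top _ _
    have := (ENNReal.lt_div_iff_mul_lt (Or.inl hne0) (Or.inl hneT)).mp hratio
    rw [hcb] at this
    exact this.le
  have hdiff : volume (I \ S) + ENNReal.ofReal (0.975 * (2 * r)) ≤ ENNReal.ofReal (2 * r) := by
    calc volume (I \ S) + ENNReal.ofReal (0.975 * (2 * r))
        ≤ volume (Metric.closedBall x r \ S) + volume (Metric.closedBall x r ∩ S) := by
          refine add_le_add (measure_mono (diff_subset_diff_left hIball)) ?_
          rw [inter_comm]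
          exact hSc
      _ = volume (Metric.closedBall x r) := measure_diff_add_inter _ hSm
      _ = ENNReal.ofReal (2 * r) := hcb
  have hfinal : volume (I \ S) ≤ ENNReal.ofReal 0.1 * volume I := by
    have h1 : volume (I \ S) + ENNReal.ofReal (0.975 * (2 * r)) ≤
        ENNReal.ofReal (0.1 * r) + ENNReal.ofReal (0.975 * (2 * r)) := by
      refine le_trans hdiff ?_
      rw [← ENNReal.ofReal_add (by positivity) (by positivity)]
      apply ENNReal.ofReal_le_ofReal
      linarith
    have h2 := (ENNReal.add_le_add_iff_right (by finiteness)).mp h1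
    rw [hvolI, ← ENNReal.ofReal_mul (by norm_num)]
    exact h2
  exact ⟨I, hIm, hIpos, hdist, hfinal⟩

/-! ### No wandering set of positive measure -/

lemma no_wandering {f : UnitAddCircle → UnitAddCircle} {F : ℝ → ℝ}
    (hmeas : Measurable f) (hgood : ∀ δ : ℝ, 0 < δ → DeltaGood f F δ)
    {S : Set UnitAddCircle} (hSm : MeasurableSet S) (hS0 : 0 < volume S)
    (hW : ∀ x ∈ S, ∀ k, 1 ≤ k → f^[k] x ∉ S) : False := by
  obtain ⟨I, hIm, hIpos, hdist, hsmall⟩ := exists_good_interval hgood hSm hS0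
  obtain ⟨A, hAm, hAI, hA04, hA2⟩ := hdist
  have hφ : Measurable (retMap f I) := measurable_retMap hmeas hIm
  set φ := retMap f I with hφdef
  set Y := A ∩ S with hYdef
  have hYm : MeasurableSet Y := hAm.inter hSm
  have hYA : Y ⊆ A := inter_subset_left
  have hsub : I ∩ φ ⁻¹' Y ⊆ Y ∪ (I \ S) := by
    rintro x ⟨hxI, hxY⟩
    rw [mem_preimage] at hxY
    by_cases hxS : x ∈ S
    · left
      rcases eq_or_ne (retTime f I x) 0 with h0 | h0
      · have hid : φ x = x := by rw [hφdef, retMap, h0]; simp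
        rwa [← hid]
      · exfalso
        obtain ⟨h1, -⟩ := retTime_spec h0
        exact hW x hxS _ h1 (hxY.2 : f^[retTime f I x] x ∈ S)
    · right; exact ⟨hxI, hxS⟩
  have h2 : 2 * volume Y ≤ volume (I ∩ φ ⁻¹' Y) := push_lower hφ hIm hYm hYA hAI hA2
  have h3 : volume (I ∩ φ ⁻¹' Y) ≤ volume Y + ENNReal.ofReal 0.1 * volume I :=
    (measure_mono hsub).trans <| (measure_union_le _ _).trans (add_le_add_right hsmall _)
  have h4 : volume A ≤ volume Y + ENNReal.ofReal 0.1 * volume I := by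
    refine le_trans (measure_mono ?_) <| (measure_union_le _ _).trans (add_le_add_right hsmall _)
    intro x hx
    by_cases hxS : x ∈ S
    · exact Or.inl ⟨hx, hxS⟩
    · exact Or.inr ⟨hAI hx, hxS⟩
  -- numeric contradiction
  have hsne : volume I ≠ ∞ := measure_ne_top _ _
  have hyne : volume Y ≠ ∞ := (lt_of_le_of_lt (measure_mono (hYA.trans hAI)) hsne.lt_top).ne
  set s : ℝ := (volume I).toReal with hs
  set y : ℝ := (volume Y).toReal with hy
  have hs0 : 0 < s := ENNReal.toReal_pos hIpos.ne' hsne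
  have hr2 : 2 * y ≤ y + 0.1 * s := by
    have := (ENNReal.toReal_le_toReal (by finiteness) (by finiteness)).mpr (h2.trans h3)
    rw [ENNReal.toReal_mul, ENNReal.toReal_add hyne (by finiteness), ENNReal.toReal_mul,
      ENNReal.toReal_ofReal (by norm_num)] at this
    simpa using this
  have hr4 : 0.4 * s ≤ y + 0.1 * s := by
    have h5 : ENNReal.ofReal 0.4 * volume I ≤ volume Y + ENNReal.ofReal 0.1 * volume I :=
      hA04.le.trans h4
    have := (ENNReal.toReal_le_toReal (by finiteness) (by finiteness)).mpr h5
    rw [ENNReal.toReal_mul, ENNReal.toReal_add hyne (by finiteness), ENNReal.toReal_mul,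
      ENNReal.toReal_ofReal (by norm_num), ENNReal.toReal_ofReal (by norm_num)] at this
    simpa using this
  linarith

/-- **The goodness criterion: `δ`-good for all `δ` implies no aciσ.**
If `f ∈ E₀¹` (a `C¹` expanding circle map fixing `0`, with `|(fⁿ)'| > λⁿ`) is `δ`-good for
every `δ > 0`, then `f` admits no (nonzero) σ-finite invariant measure absolutely
continuous with respect to Lebesgue measure. -/
theorem delta_good_forall_implies_no_acis
    (f : UnitAddCircle → UnitAddCircle) (F : ℝ → ℝ) (d : ℤ)
    (hlift : IsLiftOf f F d) (hmeas : Measurable f)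
    (hC1 : ContDiff ℝ 1 F)
    (hexp : ∃ lam : ℝ, 1 < lam ∧ ∀ n : ℕ, 1 ≤ n → ∀ x : ℝ,
      lam ^ n < |deriv (F^[n]) x|)
    (hgood : ∀ δ : ℝ, 0 < δ → DeltaGood f F δ) :
    ∀ μ : Measure UnitAddCircle, SigmaFinite μ → μ ≪ volume →
      (∀ A : Set UnitAddCircle, MeasurableSet A → μ (f ⁻¹' A) = μ A) → μ = 0 := by
  intro μ hσ hac hinv
  by_contra hμ0
  haveI := hσ
  set ρ := μ.rnDeriv volume with hρdef
  have hρm : Measurable ρ := Measure.measurable_rnDeriv _ _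
  have hwd : volume.withDensity ρ = μ := Measure.withDensity_rnDeriv_eq μ volume hac
  have hinfty : volume {x | ρ x = ∞} = 0 := by
    have h := Measure.rnDeriv_lt_top μ volume
    rw [ae_iff] at h
    simpa [not_lt, top_le_iff, hρdef] using h
  have hne : volume {x | ρ x ≠ 0} ≠ 0 := by
    intro h0
    apply hμ0
    rw [← hwd]
    have hz : ρ =ᵐ[volume] 0 := by
      rw [Filter.EventuallyEq, ae_iff]
      simpa using h0
    rw [withDensity_congr_ae hz, withDensity_zero]
  set q : ℝ≥0∞ := ENNReal.ofReal 1.05 with hqdef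
  have hq1 : 1 < q := by
    rw [hqdef, ← ENNReal.ofReal_one, ENNReal.ofReal_lt_ofReal_iff] <;> norm_num
  have hq0 : q ≠ 0 := (zero_lt_one.trans hq1).ne'
  have hqT : q ≠ ∞ := ENNReal.ofReal_ne_top
  obtain ⟨k, hk⟩ : ∃ k : ℤ, volume (ρ ⁻¹' Ico (q ^ k) (q ^ (k + 1))) ≠ 0 := by
    by_contra hall
    push_neg at hall
    have hcup : {x | ρ x ≠ 0} ⊆
        (⋃ k : ℤ, ρ ⁻¹' Ico (q ^ k) (q ^ (k + 1))) ∪ {x | ρ x = ∞} := by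
      intro x hx
      rcases eq_or_ne (ρ x) ∞ with hT | hT
      · exact Or.inr hT
      · obtain ⟨j, hj⟩ := ENNReal.exists_mem_Ico_zpow hx hT hq1 hqT
        exact Or.inl (mem_iUnion.mpr ⟨j, hj⟩)
    apply hne
    refine le_antisymm (le_trans (measure_mono hcup) ?_) zero_le
    refine le_trans (measure_union_le _ _) ?_
    rw [measure_iUnion_null hall, hinfty, add_zero]
  set c : ℝ≥0∞ := q ^ k with hcdef
  have hc0 : c ≠ 0 := (ENNReal.zpow_pos hq0 hqT k).ne'
  have hcT : c ≠ ∞ := (ENNReal.zpow_lt_top hq0 hqT k).ne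
  set Z := ρ ⁻¹' Ico (q ^ k) (q ^ (k + 1)) with hZdef
  have hZm : MeasurableSet Z := hρm measurableSet_Ico
  have hμlb : ∀ B : Set UnitAddCircle, MeasurableSet B → B ⊆ Z → c * volume B ≤ μ B := by
    intro B hBm hBZ
    rw [← hwd, withDensity_apply _ hBm, ← setLIntegral_const]
    exact setLIntegral_mono hρm fun x hx => (hBZ hx).1
  have hμub : ∀ B : Set UnitAddCircle, MeasurableSet B → B ⊆ Z →
      μ B ≤ q * c * volume B := by
    intro B hBm hBZ
    rw [← hwd, withDensity_apply _ hBm, ← setLIntegral_const]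
    refine setLIntegral_mono measurable_const fun x hx => ?_
    have hub := (hBZ hx).2.le
    rwa [ENNReal.zpow_add hq0 hqT k 1, zpow_one, mul_comm (q ^ k) q] at hub
  obtain ⟨I, hIm, hIpos, hdist, hsmall⟩ :=
    exists_good_interval hgood hZm (pos_iff_ne_zero.mpr hk)
  obtain ⟨A, hAm, hAI, hA04, hA2⟩ := hdist
  have hφ : Measurable (retMap f I) := measurable_retMap hmeas hIm
  set N : Set UnitAddCircle := I ∩ retTime f I ⁻¹' {0} with hNdef
  have hNm : MeasurableSet N :=
    hIm.inter ((measurable_retTime hmeas hIm) (measurableSet_singleton 0))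
  rcases eq_or_ne (volume (A ∩ Z ∩ N)) 0 with hN0 | hNpos
  swap
  · -- the wandering case
    refine no_wandering hmeas hgood ((hAm.inter hZm).inter hNm)
      (pos_iff_ne_zero.mpr hNpos) ?_
    rintro x ⟨-, hxI, hx0⟩ j hj hret
    rw [mem_preimage, mem_singleton_iff, retTime_eq_zero_iff] at hx0
    exact hx0 j hj hret.2.1
  -- the main case
  set Y := (A ∩ Z) \ N with hYdef
  have hYm : MeasurableSet Y := (hAm.inter hZm).diff hNm
  have hYA : Y ⊆ A := fun x hx => hx.1.1
  have hYZ : Y ⊆ Z := fun x hx => hx.1.2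
  have hYI : Y ⊆ I := hYA.trans hAI
  have hYN : ∀ x ∈ Y, retTime f I x ≠ 0 := by
    rintro x ⟨hx1, hx2⟩ h0
    exact hx2 ⟨hAI hx1.1, by rw [mem_preimage, mem_singleton_iff]; exact h0⟩
  have hflow : μ (I ∩ retMap f I ⁻¹' Y) ≤ μ Y := flow_le hmeas hIm hYm hinv hYN
  have hpush : 2 * volume Y ≤ volume (I ∩ retMap f I ⁻¹' Y) :=
    push_lower hφ hIm hYm hYA hAI hA2
  set B := (I ∩ retMap f I ⁻¹' Y) ∩ Z with hBdef
  have hBm : MeasurableSet B := (hIm.inter (hφ hYm)).inter hZm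
  have h1 : volume (I ∩ retMap f I ⁻¹' Y) ≤ volume B + ENNReal.ofReal 0.1 * volume I := by
    refine le_trans (measure_mono ?_) ((measure_union_le _ _).trans (add_le_add_right hsmall _))
    intro x hx
    rcases Classical.em (x ∈ Z) with h | h
    · exact Or.inl ⟨hx, h⟩
    · exact Or.inr ⟨hx.1, h⟩
  have h2 : volume B ≤ q * volume Y := by
    have hc1 : c * volume B ≤ μ B := hμlb B hBm fun x hx => hx.2
    have hc2 : μ B ≤ μ Y := le_trans (measure_mono inter_subset_left) hflow
    have hc3 : μ Y ≤ q * c * volume Y := hμub Y hYm hYZ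
    have hc4 : c * volume B ≤ c * (q * volume Y) := by
      refine le_trans hc1 (le_trans hc2 (le_trans hc3 (le_of_eq ?_)))
      ring
    exact (ENNReal.mul_le_mul_iff_right hc0 hcT).mp hc4
  have h3 : volume A ≤ volume Y + ENNReal.ofReal 0.1 * volume I := by
    have hsub : A ⊆ Y ∪ ((I \ Z) ∪ (A ∩ Z ∩ N)) := by
      intro x hx
      rcases Classical.em (x ∈ Z) with hz | hz
      · rcases Classical.em (x ∈ N) with hn | hn
        · exact Or.inr (Or.inr ⟨⟨hx, hz⟩, hn⟩)
        · exact Or.inl ⟨⟨hx, hz⟩, hn⟩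
      · exact Or.inr (Or.inl ⟨hAI hx, hz⟩)
    refine le_trans (measure_mono hsub) ?_
    refine le_trans (measure_union_le _ _) (add_le_add_right ?_ _)
    refine le_trans (measure_union_le _ _) ?_
    rw [hN0, add_zero]
    exact hsmall
  have hcomb : 2 * volume Y ≤ q * volume Y + ENNReal.ofReal 0.1 * volume I :=
    hpush.trans (h1.trans (add_le_add_left h2 _))
  -- numeric contradiction
  have hsne : volume I ≠ ∞ := measure_ne_top _ _
  have hyne : volume Y ≠ ∞ := ((measure_mono hYI).trans_lt hsne.lt_top).ne
  set s : ℝ := (volume I).toReal with hsdef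
  set y : ℝ := (volume Y).toReal with hydef
  have hs0 : 0 < s := ENNReal.toReal_pos hIpos.ne' hsne
  have hr2 : 2 * y ≤ 1.05 * y + 0.1 * s := by
    have := (ENNReal.toReal_le_toReal (by finiteness) (by finiteness)).mpr hcomb
    rw [ENNReal.toReal_mul, ENNReal.toReal_add (by finiteness) (by finiteness),
      ENNReal.toReal_mul, ENNReal.toReal_mul, hqdef,
      ENNReal.toReal_ofReal (by norm_num), ENNReal.toReal_ofReal (by norm_num)] at this
    simpa using this
  have hr4 : 0.4 * s ≤ y + 0.1 * s := by
    have h5 : ENNReal.ofReal 0.4 * volume I ≤ volume Y + ENNReal.ofReal 0.1 * volume I :=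
      hA04.le.trans h3
    have := (ENNReal.toReal_le_toReal (by finiteness) (by finiteness)).mpr h5
    rw [ENNReal.toReal_mul, ENNReal.toReal_add (by finiteness) (by finiteness),
      ENNReal.toReal_mul, ENNReal.toReal_ofReal (by norm_num),
      ENNReal.toReal_ofReal (by norm_num)] at this
    simpa using this
  linarith
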